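/- arXiv:2403.05445 — 8 statements merged into one kernel-verified Lean document; each statement's English description precedes it below -/
import Mathlib

section
/- Let 𝔽 be a finite field with q = |𝔽| > 2 elements and let k ≥ 2 be an integer. Let α = (α_1,…,α_{2k}) ∈ 𝔽^{2k} be nonzero with α_i = 0 for some index i, and let f = α_1 x_1x_2 + α_2 x_2x_3 + ⋯ + α_{2k-1} x_{2k-1}x_{2k} + α_{2k} x_{2k}x_1 ∈ 𝔽[x_1,…,x_{2k}]. Then the number of a ∈ (𝔽*)^{2k} with f(a) = 0 is at most (q-1)^{2k-1}. -/
/-- Cyclic successor on `Fin n`. -/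
def cSucc {n : ℕ} (i : Fin n) : Fin n := ⟨(i.1 + 1) % n, Nat.mod_lt _ i.pos⟩

/-- The cycle form `f_α(a) = Σ_{i} α_i a_i a_{i+1}` (indices mod `n`). -/
def cycSum {𝔽 : Type*} [Field 𝔽] {n : ℕ} (α : Fin n → 𝔽) (a : Fin n → 𝔽ˣ) : 𝔽 :=
  ∑ i, α i * (a i : 𝔽) * (a (cSucc i) : 𝔽)

/-- The number of points of `(𝔽*)^n` at which `f` vanishes. -/
noncomputable def zCount {𝔽 : Type*} [Field 𝔽] {n : ℕ} (f : (Fin n → 𝔽ˣ) → 𝔽) : ℕ :=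
  Nat.card {a : Fin n → 𝔽ˣ // f a = 0}

lemma cSucc_eq_add_one {n : ℕ} [NeZero n] (t : Fin n) : cSucc t = t + 1 := by
  apply Fin.ext
  simp only [cSucc, Fin.add_def, Fin.val_one']
  rw [Nat.add_mod, Nat.mod_eq_of_lt t.2]

lemma cSucc_inj {n : ℕ} [NeZero n] : Function.Injective (cSucc (n := n)) := by
  intro a b h
  rw [cSucc_eq_add_one, cSucc_eq_add_one] at h
  exact add_right_cancel h

open Fin.NatCast

theorem stmt2 {𝔽 : Type*} [Field 𝔽] [Fintype 𝔽] (q k : ℕ)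
    (hq : q = Fintype.card 𝔽) (hq2 : 2 < q) (hk : 2 ≤ k)
    (α : Fin (2*k) → 𝔽) (hα : α ≠ 0) (i : Fin (2*k)) (hi : α i = 0) :
    zCount (cycSum α) ≤ (q - 1) ^ (2*k - 1) := by
  classical
  haveI : NeZero (2*k) := ⟨by omega⟩
  -- find j with α j ≠ 0 whose cyclic predecessor p has α p = 0
  obtain ⟨j0, hj0⟩ : ∃ j0, α j0 ≠ 0 := by
    by_contra h; push_neg at h; exact hα (funext fun t => h t)
  have hP : ∃ m : ℕ, α (i + (m : Fin (2*k))) ≠ 0 := by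
    refine ⟨(j0 - i).val, ?_⟩
    rwa [Fin.cast_val_eq_self, add_sub_cancel]
  set m0 := Nat.find hP with hm0def
  have hm0 : α (i + (m0 : Fin (2*k))) ≠ 0 := Nat.find_spec hP
  have hm0pos : 0 < m0 := by
    rcases Nat.eq_zero_or_pos m0 with h | h
    · exfalso; apply hm0; rw [h]; simpa using hi
    · exact h
  set j : Fin (2*k) := i + (m0 : Fin (2*k)) with hjdef
  set p : Fin (2*k) := i + ((m0 - 1 : ℕ) : Fin (2*k)) with hpdef
  have hp0 : α p = 0 := by
    by_contra h
    exact Nat.find_min hP (m := m0 - 1) (by omega) h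
  have hsp : cSucc p = j := by
    rw [cSucc_eq_add_one, hpdef, hjdef, add_assoc]
    have h1 : ((m0 - 1 : ℕ) : Fin (2*k)) + 1 = ((m0 - 1 + 1 : ℕ) : Fin (2*k)) := by
      push_cast; ring
    rw [h1]
    congr 2
    omega
  have hone : (1 : Fin (2*k)) ≠ 0 := by
    rw [Ne, Fin.one_eq_zero_iff]; omega
  have hsj : cSucc j ≠ j := by
    rw [cSucc_eq_add_one]
    intro h
    exact hone (add_left_cancel (a := j) (by rw [h, add_zero]))
  -- injection from zero set to functions on the other coordinates
  set F : {a : Fin (2*k) → 𝔽ˣ // cycSum α a = 0} → ({t : Fin (2*k) // t ≠ j} → 𝔽ˣ) :=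
    fun a t => a.1 t.1 with hF
  have hinj : Function.Injective F := by
    rintro ⟨a, ha⟩ ⟨b, hb⟩ hab
    have hoff : ∀ t : Fin (2*k), t ≠ j → a t = b t := by
      intro t ht
      exact congrFun hab ⟨t, ht⟩
    have hterm : ∀ m ∈ Finset.univ.erase j,
        α m * (a m : 𝔽) * (a (cSucc m) : 𝔽) = α m * (b m : 𝔽) * (b (cSucc m) : 𝔽) := by
      intro m hm
      rcases eq_or_ne m p with rfl | hmp
      · rw [hp0]; ring
      · have hmj : m ≠ j := (Finset.mem_erase.mp hm).1
        have hsm : cSucc m ≠ j := fun h => hmp (cSucc_inj (h.trans hsp.symm))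
        rw [hoff m hmj, hoff _ hsm]
    have hsum : (∑ m ∈ Finset.univ.erase j, α m * (a m : 𝔽) * (a (cSucc m) : 𝔽))
        = ∑ m ∈ Finset.univ.erase j, α m * (b m : 𝔽) * (b (cSucc m) : 𝔽) :=
      Finset.sum_congr rfl hterm
    have hsplit : ∀ c : Fin (2*k) → 𝔽ˣ, cycSum α c
        = α j * (c j : 𝔽) * (c (cSucc j) : 𝔽)
          + ∑ m ∈ Finset.univ.erase j, α m * (c m : 𝔽) * (c (cSucc m) : 𝔽) := by
      intro c
      rw [cycSum, ← Finset.add_sum_erase _ _ (Finset.mem_univ j)]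
    have hkey : α j * (a j : 𝔽) * (a (cSucc j) : 𝔽)
        = α j * (b j : 𝔽) * (b (cSucc j) : 𝔽) := by
      have h1 := hsplit a
      have h2 := hsplit b
      rw [ha] at h1
      rw [hb] at h2
      have := h1.symm.trans h2
      rw [hsum] at this
      exact add_right_cancel this
    have hcs : a (cSucc j) = b (cSucc j) := hoff _ hsj
    rw [hcs] at hkey
    have haj : (a j : 𝔽) = (b j : 𝔽) := by
      have hu : ((b (cSucc j) : 𝔽)) ≠ 0 := Units.ne_zero _
      have := mul_right_cancel₀ hu hkey
      exact mul_left_cancel₀ hm0 this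
    have haj' : a j = b j := Units.ext haj
    apply Subtype.ext
    funext t
    rcases eq_or_ne t j with rfl | ht
    · exact haj'
    · exact hoff t ht
  have hle := Nat.card_le_card_of_injective F hinj
  have hcard : Nat.card ({t : Fin (2*k) // t ≠ j} → 𝔽ˣ) = (q - 1) ^ (2*k - 1) := by
    rw [Nat.card_eq_fintype_card, Fintype.card_fun, Fintype.card_units, ← hq]
    congr 1
    rw [Fintype.card_subtype_compl, Fintype.card_subtype_eq, Fintype.card_fin]
  rw [zCount]
  rw [hcard] at hle
  exact hle
end

section
/- Let 𝔽 be a finite field with q = |𝔽| > 2 elements, let k ≥ 2 be an integer, and let 2 ≤ r ≤ 2k. Let g = Σ_{i=1}^{r-1} β_i x_i x_{i+1} ∈ 𝔽[x_1,…,x_{2k}] with all coefficients β_1,…,β_{r-1} ∈ 𝔽 nonzero. Then the number of a ∈ (𝔽*)^{2k} with g(a) = 0 equals q^{-1}·[(q-1)^r + (-1)^{r-1}(q-1)^2]·(q-1)^{2k-r}. -/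
open Finset

section Aux
variable {𝔽 : Type*} [Field 𝔽] [Fintype 𝔽]

private def Msum (n : ℕ) (c : Fin n → 𝔽) (a : Fin (n+1) → 𝔽ˣ) : 𝔽 :=
  ∑ i : Fin n, c i * (a i.castSucc : 𝔽) * (a i.succ : 𝔽)

private noncomputable def Mcard (n : ℕ) (c : Fin n → 𝔽) : ℕ :=
  Nat.card {a : Fin (n+1) → 𝔽ˣ // Msum n c a = 0}

open scoped Classical in
private lemma card_unit_sol (b e d : 𝔽) (hb : b ≠ 0) (he : e ≠ 0) :
    Nat.card {u : 𝔽ˣ // b * (u : 𝔽) * e + d = 0} = if d = 0 then 0 else 1 := by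
  split_ifs with hd
  · subst hd
    have : IsEmpty {u : 𝔽ˣ // b * (u : 𝔽) * e + 0 = 0} := by
      refine ⟨fun ⟨u, h⟩ => ?_⟩
      rw [add_zero] at h
      exact (mul_ne_zero (mul_ne_zero hb u.ne_zero) he) h
    exact Nat.card_of_isEmpty
  · have hbe : b * e ≠ 0 := mul_ne_zero hb he
    have hu0 : (-d) / (b * e) ≠ 0 := div_ne_zero (neg_ne_zero.2 hd) hbe
    have : Unique {u : 𝔽ˣ // b * (u : 𝔽) * e + d = 0} := by
      refine ⟨⟨Units.mk0 _ hu0, ?_⟩, ?_⟩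
      · simp only [Units.val_mk0]
        field_simp
        ring
      · rintro ⟨u, h⟩
        apply Subtype.ext
        apply Units.ext
        simp only [Units.val_mk0]
        have huu : (u : 𝔽) * (b * e) = -d := by linear_combination h
        field_simp [← huu]
        linear_combination huu
    exact Nat.card_unique

private lemma Msum_cons (n : ℕ) (c : Fin (n+1) → 𝔽) (u : 𝔽ˣ) (a : Fin (n+1) → 𝔽ˣ) :
    Msum (n+1) c (Fin.cons u a) = c 0 * (u : 𝔽) * (a 0 : 𝔽) + Msum n (c ∘ Fin.succ) a := by
  unfold Msum
  rw [Fin.sum_univ_succ]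
  simp [← Fin.succ_castSucc]

private lemma Mcard_rec (n : ℕ) (c : Fin (n+1) → 𝔽) (hc : c 0 ≠ 0) :
    Mcard (n+1) c + Mcard n (c ∘ Fin.succ) = (Fintype.card 𝔽 - 1) ^ (n+1) := by
  classical
  have E : {a : Fin (n+2) → 𝔽ˣ // Msum (n+1) c a = 0} ≃
      Σ a' : Fin (n+1) → 𝔽ˣ, {u : 𝔽ˣ // Msum (n+1) c (Fin.cons u a') = 0} := by
    refine Equiv.trans (Equiv.subtypeEquiv
      (((Fin.consEquiv (fun _ : Fin (n+2) => 𝔽ˣ)).symm.trans (Equiv.prodComm _ _)))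
      (fun a => ?_))
      (Equiv.subtypeProdEquivSigmaSubtype fun a' u => Msum (n+1) c (Fin.cons u a') = 0)
    show Msum (n+1) c a = 0 ↔ Msum (n+1) c (Fin.cons (a 0) (Fin.tail a)) = 0
    rw [Fin.cons_self_tail]
  have h1 : Mcard (n+1) c =
      ∑ a' : Fin (n+1) → 𝔽ˣ, Nat.card {u : 𝔽ˣ // Msum (n+1) c (Fin.cons u a') = 0} := by
    rw [Mcard, Nat.card_congr E, Nat.card_eq_fintype_card, Fintype.card_sigma]
    exact Finset.sum_congr rfl fun a' _ => (Nat.card_eq_fintype_card).symm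
  have h2 : ∀ a' : Fin (n+1) → 𝔽ˣ, Nat.card {u : 𝔽ˣ // Msum (n+1) c (Fin.cons u a') = 0}
      = if Msum n (c ∘ Fin.succ) a' = 0 then 0 else 1 := by
    intro a'
    rw [← card_unit_sol (c 0) ((a' 0 : 𝔽)) (Msum n (c ∘ Fin.succ) a') hc (Units.ne_zero _)]
    apply Nat.card_congr
    exact Equiv.subtypeEquivRight fun u => by rw [Msum_cons]
  have h3 : Mcard n (c ∘ Fin.succ) =
      ∑ a' : Fin (n+1) → 𝔽ˣ, if Msum n (c ∘ Fin.succ) a' = 0 then 1 else 0 := by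
    rw [Mcard, Nat.card_eq_fintype_card, Fintype.card_subtype, Finset.card_filter]
  rw [h1, h3]
  simp_rw [h2]
  rw [← Finset.sum_add_distrib]
  have h4 : ∀ a' : Fin (n+1) → 𝔽ˣ,
      ((if Msum n (c ∘ Fin.succ) a' = 0 then 0 else 1) +
        if Msum n (c ∘ Fin.succ) a' = 0 then 1 else 0) = 1 := by
    intro a'; split_ifs <;> rfl
  rw [Finset.sum_congr rfl fun a' _ => h4 a']
  rw [Finset.sum_const, Finset.card_univ, smul_eq_mul, mul_one]
  rw [Fintype.card_pi, Finset.prod_const, Finset.card_univ, Fintype.card_fin,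
    Fintype.card_units]

private lemma Mcard_formula (q : ℕ) (hq : q = Fintype.card 𝔽) (hq2 : 2 < q)
    (n : ℕ) (c : Fin n → 𝔽) (hc : ∀ i, c i ≠ 0) :
    (Mcard n c : ℚ) = (((q:ℚ)-1)^(n+1) + (-1:ℚ)^n * ((q:ℚ)-1)^2) / q := by
  induction n with
  | zero =>
    have h0 : Mcard 0 c = q - 1 := by
      classical
      have htriv : ∀ a : Fin 1 → 𝔽ˣ, Msum 0 c a = 0 := fun a => by simp [Msum]
      rw [Mcard, Nat.card_congr (Equiv.subtypeUnivEquiv htriv), Nat.card_eq_fintype_card,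
        Fintype.card_pi]
      simp [Fintype.card_units, hq]
    rw [h0]
    have hqQ : (q:ℚ) ≠ 0 := by positivity
    have hc1 : ((q - 1 : ℕ) : ℚ) = (q:ℚ) - 1 := by
      rw [Nat.cast_sub (by omega)]; norm_num
    rw [hc1]; field_simp; ring
  | succ m ih =>
    have hrec := Mcard_rec m c (hc 0)
    have ih' := ih (c ∘ Fin.succ) (fun i => hc _)
    have hcast : ((Mcard (m+1) c : ℕ) : ℚ) + (Mcard m (c ∘ Fin.succ) : ℚ)
        = (((Fintype.card 𝔽 - 1 : ℕ))^(m+1) : ℕ) := by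
      rw [← Nat.cast_add, hrec]
    rw [ih'] at hcast
    have hq1 : ((Fintype.card 𝔽 - 1 : ℕ) : ℚ) = (q:ℚ) - 1 := by
      rw [← hq, Nat.cast_sub (by omega)]; norm_num
    rw [Nat.cast_pow, hq1] at hcast
    have hqQ : (q:ℚ) ≠ 0 := by positivity
    have hM : (Mcard (m+1) c : ℚ) = ((q:ℚ)-1)^(m+1) -
        ((((q:ℚ)-1)^(m+1) + (-1:ℚ)^m * ((q:ℚ)-1)^2) / q) := by linarith
    rw [hM]; field_simp; ring

end Aux

theorem stmt4 {𝔽 : Type*} [Field 𝔽] [Fintype 𝔽] (q k r : ℕ)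
    (hq : q = Fintype.card 𝔽) (hq2 : 2 < q) (hk : 2 ≤ k) (hr2 : 2 ≤ r) (hr : r ≤ 2*k)
    (β : Fin (r - 1) → 𝔽) (hβ : ∀ i, β i ≠ 0) :
    (Nat.card {a : Fin (2*k) → 𝔽ˣ //
        ∑ i : Fin (r - 1), β i * (a ⟨i.1, by have := i.isLt; omega⟩ : 𝔽) *
          (a ⟨i.1 + 1, by have := i.isLt; omega⟩ : 𝔽) = 0} : ℚ)
      = (((q : ℚ) - 1) ^ r + (-1 : ℚ) ^ (r - 1) * ((q : ℚ) - 1) ^ 2) * ((q : ℚ) - 1) ^ (2*k - r) /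
        (q : ℚ) := by
  obtain ⟨n, rfl⟩ : ∃ n, r = n + 1 := ⟨r - 1, by omega⟩
  obtain ⟨m, hm⟩ : ∃ m, 2*k = (n+1) + m := ⟨2*k - (n+1), by omega⟩
  show (Nat.card {a : Fin (2*k) → 𝔽ˣ //
        ∑ i : Fin n, β i * (a ⟨i.1, by have := i.isLt; omega⟩ : 𝔽) *
          (a ⟨i.1 + 1, by have := i.isLt; omega⟩ : 𝔽) = 0} : ℚ)
      = (((q : ℚ) - 1) ^ (n+1) + (-1 : ℚ) ^ n * ((q : ℚ) - 1) ^ 2) *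
          ((q : ℚ) - 1) ^ (2*k - (n+1)) / (q : ℚ)
  have hβ' : ∀ i : Fin n, β i ≠ 0 := fun i => hβ i
  have hq1 : ((Fintype.card 𝔽 - 1 : ℕ) : ℚ) = (q:ℚ) - 1 := by
    rw [← hq, Nat.cast_sub (by omega)]; norm_num
  have hmr : 2*k - (n+1) = m := by omega
  classical
  let E : (Fin (2*k) → 𝔽ˣ) ≃ (Fin (n+1) → 𝔽ˣ) × (Fin m → 𝔽ˣ) :=
    (Equiv.arrowCongr (finCongr hm) (Equiv.refl 𝔽ˣ)).trans <|
      (Equiv.arrowCongr finSumFinEquiv.symm (Equiv.refl 𝔽ˣ)).trans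
        (Equiv.sumArrowEquivProdArrow _ _ _)
  have hE : ∀ (a : Fin (2*k) → 𝔽ˣ) (j : Fin (n+1)),
      (E a).1 j = a ⟨j.1, by omega⟩ := by
    intro a j
    show a ((finCongr hm).symm (finSumFinEquiv (Sum.inl j))) = _
    congr 1
  have hcard : Nat.card {a : Fin (2*k) → 𝔽ˣ //
        ∑ i : Fin n, β i * (a ⟨i.1, by have := i.isLt; omega⟩ : 𝔽) *
          (a ⟨i.1 + 1, by have := i.isLt; omega⟩ : 𝔽) = 0}
      = Mcard n β * (Fintype.card 𝔽 - 1) ^ m := by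
    have Etot : {a : Fin (2*k) → 𝔽ˣ //
          ∑ i : Fin n, β i * (a ⟨i.1, by have := i.isLt; omega⟩ : 𝔽) *
            (a ⟨i.1 + 1, by have := i.isLt; omega⟩ : 𝔽) = 0}
        ≃ {b : Fin (n+1) → 𝔽ˣ // Msum n β b = 0} × (Fin m → 𝔽ˣ) := by
      refine (E.subtypeEquiv fun a => ?_).trans Equiv.prodSubtypeFstEquivSubtypeProd
      unfold Msum
      constructor <;> intro h <;> rw [← h] <;>
        refine Finset.sum_congr rfl fun i _ => ?_ <;>
        rw [hE a i.castSucc, hE a i.succ] <;> rfl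
    have hrest : Nat.card (Fin m → 𝔽ˣ) = (Fintype.card 𝔽 - 1) ^ m := by
      rw [Nat.card_eq_fintype_card, Fintype.card_pi, Finset.prod_const, Finset.card_univ,
        Fintype.card_fin, Fintype.card_units]
    rw [Nat.card_congr Etot, Nat.card_prod, Mcard, hrest]
  rw [hcard]
  rw [Nat.cast_mul, Nat.cast_pow, hq1, Mcard_formula q hq hq2 n β hβ']
  rw [hmr]
  field_simp
end

section
/- Let 𝔽 be a finite field with q = |𝔽| > 2 elements and let α_1, α_2, α_3, α_4 ∈ 𝔽 all be nonzero. Let f = α_1 x_1x_2 + α_2 x_2x_3 + α_3 x_3x_4 + α_4 x_4x_1 ∈ 𝔽[x_1,x_2,x_3,x_4]. Then the number of a ∈ (𝔽*)^4 with f(a) = 0 is at most (q-1)^2(2q-3), with equality if and only if α_1 α_3 = α_2 α_4. -/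
lemma cardW' {𝔽 : Type*} [Field 𝔽] [Fintype 𝔽] [DecidableEq 𝔽] (A B : 𝔽) :
    Nat.card {w : 𝔽ˣ × 𝔽ˣ // (w.1 : 𝔽) * A + (w.2 : 𝔽) * B = 0} =
      if A = 0 then (if B = 0 then (Fintype.card 𝔽 - 1) ^ 2 else 0)
      else (if B = 0 then 0 else Fintype.card 𝔽 - 1) := by
  by_cases hA : A = 0 <;> by_cases hB : B = 0
  · rw [if_pos hA, if_pos hB, hA, hB]
    rw [Nat.card_congr (Equiv.subtypeUnivEquiv (by intro w; simp))]
    simp [Nat.card_eq_fintype_card, Fintype.card_units, sq]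
  · rw [if_pos hA, if_neg hB, hA]
    have : IsEmpty {w : 𝔽ˣ × 𝔽ˣ // (w.1 : 𝔽) * 0 + (w.2 : 𝔽) * B = 0} := by
      constructor; rintro ⟨w, hw⟩
      simp only [mul_zero, zero_add, mul_eq_zero] at hw
      rcases hw with h | h
      · exact w.2.ne_zero h
      · exact hB h
    exact Nat.card_of_isEmpty
  · rw [if_neg hA, if_pos hB, hB]
    have : IsEmpty {w : 𝔽ˣ × 𝔽ˣ // (w.1 : 𝔽) * A + (w.2 : 𝔽) * 0 = 0} := by
      constructor; rintro ⟨w, hw⟩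
      simp only [mul_zero, add_zero, mul_eq_zero] at hw
      rcases hw with h | h
      · exact w.1.ne_zero h
      · exact hA h
    exact Nat.card_of_isEmpty
  · rw [if_neg hA, if_neg hB]
    set c : 𝔽ˣ := Units.mk0 A hA * (Units.mk0 B hB)⁻¹ with hc
    have hcv : (c : 𝔽) = A * B⁻¹ := by simp [hc]
    have e : {w : 𝔽ˣ × 𝔽ˣ // (w.1 : 𝔽) * A + (w.2 : 𝔽) * B = 0} ≃ 𝔽ˣ := by
      refine ⟨fun w => w.1.1, fun u => ⟨(u, -(c * u)), ?_⟩, ?_, ?_⟩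
      · push_cast [hcv]
        field_simp
        ring
      · rintro ⟨⟨u, v⟩, hw⟩
        simp only [Subtype.mk.injEq, Prod.mk.injEq]
        refine ⟨trivial, ?_⟩
        have hv : (v : 𝔽) = -(A * B⁻¹) * u := by
          field_simp
          linear_combination hw
        apply Units.ext
        push_cast [hcv, hv]
        ring
      · intro u; rfl
    rw [Nat.card_congr e, Nat.card_eq_fintype_card, Fintype.card_units]

lemma sumFib' {𝔽 : Type*} [Field 𝔽] [Fintype 𝔽] [DecidableEq 𝔽]
    (α₁ α₂ α₃ α₄ : 𝔽) (h1 : α₁ ≠ 0) (h2 : α₂ ≠ 0) (h3 : α₃ ≠ 0) (h4 : α₄ ≠ 0)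
    (u : 𝔽ˣ) :
    ∑ v : 𝔽ˣ, (if α₁ * (u : 𝔽) + α₂ * (v : 𝔽) = 0 then
        (if α₃ * (v : 𝔽) + α₄ * (u : 𝔽) = 0 then (Fintype.card 𝔽 - 1) ^ 2 else 0)
      else (if α₃ * (v : 𝔽) + α₄ * (u : 𝔽) = 0 then 0 else Fintype.card 𝔽 - 1)) =
      if α₁ * α₃ = α₂ * α₄ then
        (Fintype.card 𝔽 - 1) ^ 2 + (Fintype.card 𝔽 - 2) * (Fintype.card 𝔽 - 1)
      else (Fintype.card 𝔽 - 3) * (Fintype.card 𝔽 - 1) := by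
  set v₀ : 𝔽ˣ := -(Units.mk0 α₁ h1 * u * (Units.mk0 α₂ h2)⁻¹) with hv₀
  set v₁ : 𝔽ˣ := -(Units.mk0 α₄ h4 * u * (Units.mk0 α₃ h3)⁻¹) with hv₁
  have hv₀v : (v₀ : 𝔽) = -(α₁ * u * α₂⁻¹) := by simp [hv₀]
  have hv₁v : (v₁ : 𝔽) = -(α₄ * u * α₃⁻¹) := by simp [hv₁]
  have hA0 : ∀ v : 𝔽ˣ, (α₁ * (u : 𝔽) + α₂ * (v : 𝔽) = 0) ↔ v = v₀ := by
    intro v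
    rw [Units.ext_iff, hv₀v]
    constructor
    · intro h
      field_simp
      linear_combination h
    · intro h
      rw [h]
      field_simp
      ring
  have hB0 : ∀ v : 𝔽ˣ, (α₃ * (v : 𝔽) + α₄ * (u : 𝔽) = 0) ↔ v = v₁ := by
    intro v
    rw [Units.ext_iff, hv₁v]
    constructor
    · intro h
      field_simp
      linear_combination h
    · intro h
      rw [h]
      field_simp
      ring
  have h01 : v₀ = v₁ ↔ α₁ * α₃ = α₂ * α₄ := by
    rw [Units.ext_iff, hv₀v, hv₁v]
    constructor
    · intro h
      have hu : (u : 𝔽) ≠ 0 := u.ne_zero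
      field_simp at h
      apply mul_left_cancel₀ hu
      linear_combination (-(u : 𝔽)) * h
    · intro h
      field_simp
      linear_combination -h
  simp only [hA0, hB0]
  have hcard : Fintype.card 𝔽ˣ = Fintype.card 𝔽 - 1 := Fintype.card_units 𝔽
  by_cases hvv : v₀ = v₁
  · rw [if_pos (h01.mp hvv), ← hvv]
    rw [← Finset.add_sum_erase Finset.univ _ (Finset.mem_univ v₀)]
    simp only [if_pos rfl]
    congr 1
    rw [Finset.sum_congr rfl (fun v hv => by
      rw [if_neg (Finset.ne_of_mem_erase hv), if_neg (Finset.ne_of_mem_erase hv)]),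
      Finset.sum_const,
      Finset.card_erase_of_mem (Finset.mem_univ v₀), Finset.card_univ, hcard, smul_eq_mul]
    congr 1
  · rw [if_neg (fun h => hvv (h01.mpr h))]
    rw [← Finset.add_sum_erase Finset.univ _ (Finset.mem_univ v₀)]
    have hv₁mem : v₁ ∈ Finset.univ.erase v₀ :=
      Finset.mem_erase.mpr ⟨Ne.symm hvv, Finset.mem_univ v₁⟩
    rw [← Finset.add_sum_erase _ _ hv₁mem]
    rw [if_pos rfl, if_neg hvv, if_neg (Ne.symm hvv), if_pos rfl]
    rw [Finset.sum_congr rfl (fun v hv => by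
      have hv' := Finset.mem_erase.mp hv
      have hv'' := Finset.mem_erase.mp hv'.2
      rw [if_neg hv''.1, if_neg hv'.1]), Finset.sum_const,
      Finset.card_erase_of_mem hv₁mem,
      Finset.card_erase_of_mem (Finset.mem_univ v₀), Finset.card_univ, hcard, smul_eq_mul,
      zero_add]
    have h3' : Fintype.card 𝔽 - 1 - 1 - 1 = Fintype.card 𝔽 - 3 := by omega
    rw [h3']
    rw [zero_add]

theorem stmt6 {𝔽 : Type*} [Field 𝔽] [Fintype 𝔽] (q : ℕ)
    (hq : q = Fintype.card 𝔽) (hq2 : 2 < q)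
    (α₁ α₂ α₃ α₄ : 𝔽) (h1 : α₁ ≠ 0) (h2 : α₂ ≠ 0) (h3 : α₃ ≠ 0) (h4 : α₄ ≠ 0) :
    Nat.card {a : Fin 4 → 𝔽ˣ //
        α₁ * (a 0 : 𝔽) * (a 1 : 𝔽) + α₂ * (a 1 : 𝔽) * (a 2 : 𝔽) +
          α₃ * (a 2 : 𝔽) * (a 3 : 𝔽) + α₄ * (a 3 : 𝔽) * (a 0 : 𝔽) = 0}
      ≤ (q - 1) ^ 2 * (2 * q - 3) ∧
    (Nat.card {a : Fin 4 → 𝔽ˣ //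
        α₁ * (a 0 : 𝔽) * (a 1 : 𝔽) + α₂ * (a 1 : 𝔽) * (a 2 : 𝔽) +
          α₃ * (a 2 : 𝔽) * (a 3 : 𝔽) + α₄ * (a 3 : 𝔽) * (a 0 : 𝔽) = 0}
        = (q - 1) ^ 2 * (2 * q - 3) ↔ α₁ * α₃ = α₂ * α₄) := by
  classical
  have e : {a : Fin 4 → 𝔽ˣ //
        α₁ * (a 0 : 𝔽) * (a 1 : 𝔽) + α₂ * (a 1 : 𝔽) * (a 2 : 𝔽) +
          α₃ * (a 2 : 𝔽) * (a 3 : 𝔽) + α₄ * (a 3 : 𝔽) * (a 0 : 𝔽) = 0} ≃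
      Σ p : 𝔽ˣ × 𝔽ˣ, {w : 𝔽ˣ × 𝔽ˣ //
        (w.1 : 𝔽) * (α₁ * (p.1 : 𝔽) + α₂ * (p.2 : 𝔽)) +
          (w.2 : 𝔽) * (α₃ * (p.2 : 𝔽) + α₄ * (p.1 : 𝔽)) = 0} :=
    { toFun := fun a => ⟨(a.1 0, a.1 2), ⟨(a.1 1, a.1 3), by
        have h := a.2; linear_combination h⟩⟩
      invFun := fun x => ⟨![x.1.1, x.2.1.1, x.1.2, x.2.1.2], by
        have h := x.2.2
        simp only [Matrix.cons_val_zero, Matrix.cons_val_one, Matrix.head_cons,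
          Matrix.cons_val_two, Matrix.tail_cons, Matrix.cons_val_three]
        linear_combination h⟩
      left_inv := fun a => Subtype.ext (by funext i; fin_cases i <;> rfl)
      right_inv := fun x => rfl }
  have key : Nat.card {a : Fin 4 → 𝔽ˣ //
        α₁ * (a 0 : 𝔽) * (a 1 : 𝔽) + α₂ * (a 1 : 𝔽) * (a 2 : 𝔽) +
          α₃ * (a 2 : 𝔽) * (a 3 : 𝔽) + α₄ * (a 3 : 𝔽) * (a 0 : 𝔽) = 0} =
      (q - 1) * (if α₁ * α₃ = α₂ * α₄ then
        (q - 1) ^ 2 + (q - 2) * (q - 1) else (q - 3) * (q - 1)) := by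
    rw [Nat.card_congr e, Nat.card_eq_fintype_card, Fintype.card_sigma]
    have step : ∀ p : 𝔽ˣ × 𝔽ˣ, Fintype.card {w : 𝔽ˣ × 𝔽ˣ //
        (w.1 : 𝔽) * (α₁ * (p.1 : 𝔽) + α₂ * (p.2 : 𝔽)) +
          (w.2 : 𝔽) * (α₃ * (p.2 : 𝔽) + α₄ * (p.1 : 𝔽)) = 0} =
        (if α₁ * (p.1 : 𝔽) + α₂ * (p.2 : 𝔽) = 0 then
          (if α₃ * (p.2 : 𝔽) + α₄ * (p.1 : 𝔽) = 0 then (Fintype.card 𝔽 - 1) ^ 2 else 0)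
        else (if α₃ * (p.2 : 𝔽) + α₄ * (p.1 : 𝔽) = 0 then 0 else Fintype.card 𝔽 - 1)) := by
      intro p
      rw [← Nat.card_eq_fintype_card]
      exact cardW' _ _
    rw [Finset.sum_congr rfl fun p _ => step p, Fintype.sum_prod_type]
    rw [Finset.sum_congr rfl fun u _ => sumFib' α₁ α₂ α₃ α₄ h1 h2 h3 h4 u]
    rw [Finset.sum_const, Finset.card_univ, Fintype.card_units, smul_eq_mul, ← hq]
  rw [key]
  clear key e
  obtain ⟨r, rfl⟩ : ∃ r, q = r + 3 := ⟨q - 3, by omega⟩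
  have e1 : r + 3 - 1 = r + 2 := by omega
  have e2 : r + 3 - 2 = r + 1 := by omega
  have e3 : r + 3 - 3 = r := by omega
  have e4 : 2 * (r + 3) - 3 = 2 * r + 3 := by omega
  rw [e1, e2, e3, e4]
  by_cases hαα : α₁ * α₃ = α₂ * α₄
  · rw [if_pos hαα]
    have : (r + 2) * ((r + 2) ^ 2 + (r + 1) * (r + 2)) = (r + 2) ^ 2 * (2 * r + 3) := by ring
    rw [this]
    exact ⟨le_refl _, ⟨fun _ => hαα, fun _ => rfl⟩⟩
  · rw [if_neg hαα]
    have hlt : (r + 2) * (r * (r + 2)) < (r + 2) ^ 2 * (2 * r + 3) := by nlinarith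
    exact ⟨le_of_lt hlt, ⟨fun h => absurd h (ne_of_lt hlt), fun h => absurd h hαα⟩⟩
end

section
/- Let 𝔽 be a finite field with q = |𝔽| > 2 elements and let k ≥ 2 be an integer. The projective toric subset X ⊆ ℙ^{2k-1}(𝔽) parameterized by the even cycle C_{2k} has cardinality |X| = (q-1)^{2k-2}. -/
/-- The vector of products of consecutive coordinates along the cycle:
`(x₁x₂, x₂x₃, …, x_{n-1}x_n, x_nx₁)`. -/
def cycVec {𝔽 : Type*} [Field 𝔽] {n : ℕ} (x : Fin n → 𝔽ˣ) : Fin n → 𝔽 :=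
  fun i => (x i : 𝔽) * (x (cSucc i) : 𝔽)

lemma cycVec_ne_zero {𝔽 : Type*} [Field 𝔽] {n : ℕ} (hn : 0 < n) (x : Fin n → 𝔽ˣ) :
    cycVec x ≠ 0 := by
  intro h
  have h0 := congrFun h ⟨0, hn⟩
  simp only [cycVec, Pi.zero_apply] at h0
  exact mul_ne_zero (Units.ne_zero _) (Units.ne_zero _) h0

/-- The projective toric subset of `ℙ^{2k-1}` parameterized by the even cycle of length `2k`. -/
def cycX (𝔽 : Type*) [Field 𝔽] (k : ℕ) (hk : 0 < k) :
    Set (Projectivization 𝔽 (Fin (2*k) → 𝔽)) :=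
  {P | ∃ x : Fin (2*k) → 𝔽ˣ,
    P = Projectivization.mk 𝔽 (cycVec x) (cycVec_ne_zero (by omega) x)}

/-- Extend a `(2k-2)`-tuple of units to a `2k`-tuple whose first two entries are `1`. -/
def cExt {𝔽 : Type*} [Field 𝔽] {k : ℕ} (u : Fin (2*k-2) → 𝔽ˣ) : Fin (2*k) → 𝔽ˣ :=
  fun i => if h : i.1 < 2 then 1 else u ⟨i.1 - 2, by have := i.2; omega⟩

lemma cSucc_val {n : ℕ} {i : ℕ} (hi : i < n) (hi1 : i + 1 < n) :
    cSucc ⟨i, hi⟩ = ⟨i + 1, hi1⟩ := by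
  simp [cSucc, Nat.mod_eq_of_lt hi1]

lemma cExt_injective {𝔽 : Type*} [Field 𝔽] {k : ℕ} (hk : 2 ≤ k)
    (u u' : Fin (2*k-2) → 𝔽ˣ) {a : 𝔽ˣ}
    (h : a • cycVec (cExt u') = cycVec (cExt u)) : u = u' := by
  have hk2 : 2 < 2*k := by omega
  have h1 : ∀ (j : Fin (2*k)), (a • cycVec (cExt u')) j = cycVec (cExt u) j :=
    fun j => congrFun h j
  -- first, a = 1
  have hz : (0:ℕ) < 2*k := by omega
  have hz1 : (0:ℕ)+1 < 2*k := by omega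
  have h0 := h1 ⟨0, hz⟩
  have hs : cSucc (⟨0, hz⟩ : Fin (2*k)) = ⟨1, hz1⟩ := cSucc_val hz hz1
  simp only [cycVec, Pi.smul_apply, Units.smul_def, hs, cExt] at h0
  norm_num at h0
  -- now a = 1
  have key : ∀ i (hi : i < 2*k), cExt u ⟨i, hi⟩ = cExt u' ⟨i, hi⟩ := by
    intro i
    induction i with
    | zero => intro hi; simp [cExt]
    | succ j ih =>
      intro hi
      by_cases hj2 : j + 1 < 2
      · simp [cExt, hj2]
      · have hj : j < 2*k := by omega
        have hcoord := h1 ⟨j, hj⟩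
        have hs2 : cSucc (⟨j, hj⟩ : Fin (2*k)) = ⟨j+1, hi⟩ := cSucc_val hj hi
        simp only [cycVec, Pi.smul_apply, Units.smul_def, hs2, h0, Units.val_one,
          one_mul, one_smul, smul_eq_mul] at hcoord
        rw [ih hj] at hcoord
        exact Units.ext (mul_left_cancel₀ (Units.ne_zero _) hcoord).symm
  funext i
  have hi2 : i.1 + 2 < 2*k := by have := i.2; omega
  have := key (i.1 + 2) hi2
  simp only [cExt, dif_neg (by omega : ¬ i.1 + 2 < 2)] at this
  have heq : (⟨i.1 + 2 - 2, by have := i.2; omega⟩ : Fin (2*k-2)) = i := by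
    ext; simp
  rwa [heq] at this

theorem stmt8 {𝔽 : Type*} [Field 𝔽] [Fintype 𝔽] (q k : ℕ)
    (hq : q = Fintype.card 𝔽) (hq2 : 2 < q) (hk : 2 ≤ k) :
    Nat.card ↥(cycX 𝔽 k (Nat.lt_of_lt_of_le Nat.zero_lt_two hk)) = (q - 1) ^ (2*k - 2) := by
  classical
  have hk0 : 0 < 2*k := by omega
  set Ψ : (Fin (2*k-2) → 𝔽ˣ) → ↥(cycX 𝔽 k (Nat.lt_of_lt_of_le Nat.zero_lt_two hk)) :=
    fun u => ⟨Projectivization.mk 𝔽 (cycVec (cExt u)) (cycVec_ne_zero hk0 (cExt u)),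
      ⟨cExt u, rfl⟩⟩ with hΨ
  have hbij : Function.Bijective Ψ := by
    constructor
    · intro u u' huu
      have : Projectivization.mk 𝔽 (cycVec (cExt u)) (cycVec_ne_zero hk0 (cExt u))
          = Projectivization.mk 𝔽 (cycVec (cExt u')) (cycVec_ne_zero hk0 (cExt u')) := by
        simpa [hΨ, Subtype.ext_iff] using huu
      rw [Projectivization.mk_eq_mk_iff] at this
      obtain ⟨a, ha⟩ := this
      exact cExt_injective hk u u' ha
    · rintro ⟨P, x, rfl⟩
      -- normalize x
      have h02 : (0:ℕ) < 2*k := by omega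
      have h12 : (1:ℕ) < 2*k := by omega
      set x0 : 𝔽ˣ := x ⟨0, h02⟩ with hx0
      set x1 : 𝔽ˣ := x ⟨1, h12⟩ with hx1
      set u : Fin (2*k-2) → 𝔽ˣ :=
        fun i => (if (i.1 + 2) % 2 = 0 then x0⁻¹ else x1⁻¹) * x ⟨i.1 + 2, by have := i.2; omega⟩
        with hu
      have hext : ∀ j : Fin (2*k),
          cExt u j = (if j.1 % 2 = 0 then x0⁻¹ else x1⁻¹) * x j := by
        intro j
        by_cases hj : j.1 < 2
        · have hj01 : j = ⟨0, h02⟩ ∨ j = ⟨1, h12⟩ := by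
            have : j.1 = 0 ∨ j.1 = 1 := by omega
            rcases this with h | h
            · exact Or.inl (Fin.ext h)
            · exact Or.inr (Fin.ext h)
          rcases hj01 with h | h
          · subst h; simp [cExt, ← hx0]
          · subst h; simp [cExt, ← hx1]
        · have hj2 : 2 ≤ j.1 := by omega
          simp only [cExt, dif_neg (by omega : ¬ j.1 < 2), hu]
          have h2 : (⟨j.1 - 2 + 2, by have := j.2; omega⟩ : Fin (2*k)) = j := by
            ext
            show j.1 - 2 + 2 = j.1
            omega
          rw [show (j.1 - 2 + 2) % 2 = j.1 % 2 by omega, h2]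
      refine ⟨u, Subtype.ext ?_⟩
      simp only [hΨ]
      rw [Projectivization.mk_eq_mk_iff]
      refine ⟨(x0 * x1)⁻¹, ?_⟩
      funext i
      have hpar : (cSucc i).1 % 2 = (i.1 + 1) % 2 := by
        rcases Nat.lt_or_ge (i.1 + 1) (2*k) with h | h
        · simp [cSucc, Nat.mod_eq_of_lt h]
        · have hi := i.2
          have : i.1 = 2*k - 1 := by omega
          simp only [cSucc]
          have : (i.1 + 1) % (2*k) = 0 := by
            rw [show i.1 + 1 = 2*k by omega]; simp
          rw [this]
          omega
      have hx0n : (x0 : 𝔽) ≠ 0 := x0.ne_zero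
      have hx1n : (x1 : 𝔽) ≠ 0 := x1.ne_zero
      simp only [cycVec, Pi.smul_apply, hext i, hext (cSucc i), hpar,
        Units.smul_def, Units.val_mul, Units.val_inv_eq_inv_val]
      rcases Nat.even_or_odd i.1 with he | ho
      · have hp1 : i.1 % 2 = 0 := Nat.even_iff.mp he
        have hp2 : ¬ (i.1 + 1) % 2 = 0 := by omega
        rw [if_pos hp1, if_neg hp2]
        simp only [Units.val_mul, Units.val_inv_eq_inv_val]
        field_simp
        linear_combination (↑(x i) * ↑(x (cSucc i)) : 𝔽) * (((x1:𝔽) * (x1:𝔽)⁻¹) * mul_inv_cancel₀ hx0n + mul_inv_cancel₀ hx1n)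
      · have hp1 : ¬ i.1 % 2 = 0 := by have := Nat.odd_iff.mp ho; omega
        have hp2 : (i.1 + 1) % 2 = 0 := by have := Nat.odd_iff.mp ho; omega
        rw [if_neg hp1, if_pos hp2]
        simp only [Units.val_mul, Units.val_inv_eq_inv_val]
        field_simp
        linear_combination (↑(x i) * ↑(x (cSucc i)) : 𝔽) * (((x1:𝔽) * (x1:𝔽)⁻¹) * mul_inv_cancel₀ hx0n + mul_inv_cancel₀ hx1n)
  rw [← Nat.card_eq_of_bijective Ψ hbij, Nat.card_eq_fintype_card,
    Fintype.card_fun, Fintype.card_fin, Fintype.card_units, hq]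
end

section
/- Let 𝔽 be a finite field with q = |𝔽| > 2 elements and let k ≥ 2 be an integer. If α = (α_1,…,α_{2k}) ∈ 𝔽^{2k} is such that α_1 a_1a_2 + α_2 a_2a_3 + ⋯ + α_{2k-1} a_{2k-1}a_{2k} + α_{2k} a_{2k}a_1 = 0 for every a ∈ (𝔽*)^{2k}, then α = 0. Consequently, the parameterized code C_X(1) over the even cycle C_{2k} has dimension 2k as an 𝔽-vector space. -/
/-- The parameterized code of order 1 over the even cycle: the set of words obtained by
evaluating `F/t₁` at the points of `X`, for `F` a linear form. -/
def evalCode (𝔽 : Type*) [Field 𝔽] (k : ℕ) (hk : 0 < k) : Set (↥(cycX 𝔽 k hk) → 𝔽) :=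
  {w | ∃ α : Fin (2*k) → 𝔽, ∀ P : ↥(cycX 𝔽 k hk),
    w P = (∑ i, α i * Projectivization.rep (P : Projectivization 𝔽 (Fin (2*k) → 𝔽)) i) /
      Projectivization.rep (P : Projectivization 𝔽 (Fin (2*k) → 𝔽)) ⟨0, by omega⟩}


/-! ### Auxiliary material -/

/-- Cyclic predecessor on `Fin n`. -/
def cPred {n : ℕ} (i : Fin n) : Fin n := ⟨(i.1 + (n-1)) % n, Nat.mod_lt _ i.pos⟩

lemma add_mod_ne {n d j : ℕ} (hd : 0 < d) (hdn : d < n) (hj : j < n) : (j + d) % n ≠ j := by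
  intro h
  have h1 : j ≡ j + d [MOD n] := by
    unfold Nat.ModEq
    rw [Nat.mod_eq_of_lt hj, h]
  have h2 := (Nat.modEq_iff_dvd' (Nat.le_add_right j d)).1 h1
  simp only [Nat.add_sub_cancel_left] at h2
  exact absurd (Nat.le_of_dvd hd h2) (not_le.2 hdn)

lemma cSucc_cPred {n : ℕ} (j : Fin n) : cSucc (cPred j) = j := by
  have hn := j.pos
  apply Fin.ext
  show ((j.1 + (n-1)) % n + 1) % n = j.1
  rw [Nat.mod_add_mod]
  have h1 : j.1 + (n-1) + 1 = j.1 + n := by omega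
  rw [h1, Nat.add_mod_right, Nat.mod_eq_of_lt j.2]

lemma cPred_cSucc {n : ℕ} (j : Fin n) : cPred (cSucc j) = j := by
  have hn := j.pos
  apply Fin.ext
  show ((j.1 + 1) % n + (n-1)) % n = j.1
  rw [Nat.mod_add_mod]
  have h1 : j.1 + 1 + (n-1) = j.1 + n := by omega
  rw [h1, Nat.add_mod_right, Nat.mod_eq_of_lt j.2]

lemma cSucc_eq_iff {n : ℕ} {i j : Fin n} : cSucc i = j ↔ i = cPred j := by
  constructor
  · intro h; rw [← h, cPred_cSucc]
  · intro h; rw [h, cSucc_cPred]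

lemma cSucc_inj_s10 {n : ℕ} {i j : Fin n} (h : cSucc i = cSucc j) : i = j := by
  have := congrArg cPred h
  rwa [cPred_cSucc, cPred_cSucc] at this

lemma cSucc_ne {n : ℕ} (hn : 2 ≤ n) (j : Fin n) : cSucc j ≠ j := by
  intro h
  exact add_mod_ne (d := 1) (by omega) (by omega) j.2 (congrArg Fin.val h)

lemma cPred_ne {n : ℕ} (hn : 2 ≤ n) (j : Fin n) : cPred j ≠ j := by
  intro h
  have h2 := cSucc_cPred j
  rw [h] at h2
  exact cSucc_ne hn j h2

lemma cSucc_cSucc_ne {n : ℕ} (hn : 3 ≤ n) (j : Fin n) : cSucc (cSucc j) ≠ j := by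
  intro h
  have hv : ((j.1 + 1) % n + 1) % n = j.1 := congrArg Fin.val h
  rw [Nat.mod_add_mod] at hv
  exact add_mod_ne (d := 2) (by omega) (by omega) j.2 hv

lemma cPred_ne_cSucc {n : ℕ} (hn : 3 ≤ n) (j : Fin n) : cPred j ≠ cSucc j := by
  intro h
  apply cSucc_cSucc_ne hn j
  rw [← h, cSucc_cPred]

lemma update_coe {𝔽 : Type*} [Field 𝔽] {n : ℕ} (j i : Fin n) (u : 𝔽ˣ) :
    ((Function.update (fun _ => (1:𝔽ˣ)) j u i : 𝔽ˣ) : 𝔽) = if i = j then (u:𝔽) else 1 := by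
  by_cases h : i = j
  · subst h; rw [if_pos rfl, Function.update_self]
  · rw [if_neg h, Function.update_of_ne h]; exact Units.val_one

lemma update2_coe {𝔽 : Type*} [Field 𝔽] {n : ℕ} (j i : Fin n) (u : 𝔽ˣ) :
    ((Function.update (Function.update (fun _ => (1:𝔽ˣ)) j u) (cSucc j) u i : 𝔽ˣ) : 𝔽) =
      if i = cSucc j then (u:𝔽) else if i = j then (u:𝔽) else 1 := by
  by_cases h1 : i = cSucc j
  · subst h1; rw [if_pos rfl, Function.update_self]
  · rw [if_neg h1, Function.update_of_ne h1]
    by_cases h2 : i = j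
    · subst h2; rw [if_pos rfl, Function.update_self]
    · rw [if_neg h2, Function.update_of_ne h2]; exact Units.val_one

lemma cycSum_single {𝔽 : Type*} [Field 𝔽] {n : ℕ} (hn : 3 ≤ n) (α : Fin n → 𝔽) (u : 𝔽ˣ)
    (j : Fin n) :
    cycSum α (Function.update (fun _ => 1) j u) =
      (∑ i, α i) + ((u:𝔽) - 1) * α j + ((u:𝔽) - 1) * α (cPred j) := by
  unfold cycSum
  have hstep : ∀ i ∈ Finset.univ, α i * ((Function.update (fun _ => (1:𝔽ˣ)) j u) i : 𝔽) *
      ((Function.update (fun _ => (1:𝔽ˣ)) j u) (cSucc i) : 𝔽) =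
      α i + (if i = j then ((u:𝔽)-1) * α i else 0) + (if i = cPred j then ((u:𝔽)-1) * α i else 0) := by
    intro i _
    rw [update_coe, update_coe]
    by_cases h1 : i = j
    · have h2 : cSucc i ≠ j := by rw [h1]; exact cSucc_ne (by omega) j
      have h3 : i ≠ cPred j := by rw [h1]; exact Ne.symm (cPred_ne (by omega) j)
      simp only [if_pos h1, if_neg h2, if_neg h3]
      ring
    · by_cases h2 : i = cPred j
      · have h3 : cSucc i = j := by rw [h2, cSucc_cPred]
        simp only [if_neg h1, if_pos h3, if_pos h2]
        ring
      · have h3 : cSucc i ≠ j := fun h => h2 (cSucc_eq_iff.1 h)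
        simp only [if_neg h1, if_neg h3, if_neg h2]
        ring
  rw [Finset.sum_congr rfl hstep, Finset.sum_add_distrib, Finset.sum_add_distrib,
    Finset.sum_ite_eq', Finset.sum_ite_eq']
  simp

lemma cycSum_double {𝔽 : Type*} [Field 𝔽] {n : ℕ} (hn : 3 ≤ n) (α : Fin n → 𝔽) (u : 𝔽ˣ)
    (j : Fin n) :
    cycSum α (Function.update (Function.update (fun _ => 1) j u) (cSucc j) u) =
      (∑ i, α i) + ((u:𝔽)^2 - 1) * α j + ((u:𝔽) - 1) * α (cPred j)
        + ((u:𝔽) - 1) * α (cSucc j) := by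
  unfold cycSum
  set a := Function.update (Function.update (fun _ => (1:𝔽ˣ)) j u) (cSucc j) u with ha
  have hstep : ∀ i ∈ Finset.univ, α i * (a i : 𝔽) * (a (cSucc i) : 𝔽) =
      α i + (if i = j then ((u:𝔽)^2-1) * α i else 0)
        + (if i = cPred j then ((u:𝔽)-1) * α i else 0)
        + (if i = cSucc j then ((u:𝔽)-1) * α i else 0) := by
    intro i _
    rw [ha, update2_coe, update2_coe]
    by_cases h1 : i = j
    · have h2 : cSucc i = cSucc j := by rw [h1]
      have h3 : i ≠ cSucc j := by rw [h1]; exact Ne.symm (cSucc_ne (by omega) j)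
      have h4 : i ≠ cPred j := by rw [h1]; exact Ne.symm (cPred_ne (by omega) j)
      have h6 : cSucc i ≠ j := by rw [h1]; exact cSucc_ne (by omega) j
      simp only [if_neg h3, if_pos h1, if_pos h2, if_neg h4, if_neg h6]
      ring
    · by_cases h2 : i = cPred j
      · have h3 : cSucc i = j := by rw [h2, cSucc_cPred]
        have h4 : i ≠ cSucc j := h2 ▸ cPred_ne_cSucc hn j
        have h5 : cSucc i ≠ cSucc j := fun h => (cSucc_ne (by omega) j) (h3 ▸ h).symm
        simp only [if_neg h4, if_neg h1, if_neg h5, if_pos h3, if_pos h2]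
        ring
      · by_cases h3 : i = cSucc j
        · have h4 : cSucc i ≠ cSucc j := by
            rw [h3]; intro h; exact cSucc_ne (by omega) (cSucc j) h
          have h5 : cSucc i ≠ j := by
            rw [h3]; exact cSucc_cSucc_ne hn j
          simp only [if_pos h3, if_neg h1, if_neg h4, if_neg h5, if_neg h2]
          ring
        · have h4 : cSucc i ≠ cSucc j := fun h => h1 (cSucc_inj_s10 h)
          have h5 : cSucc i ≠ j := fun h => h2 (cSucc_eq_iff.1 h)
          simp only [if_neg h1, if_neg h2, if_neg h3, if_neg h4, if_neg h5]
          ring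
  rw [Finset.sum_congr rfl hstep, Finset.sum_add_distrib, Finset.sum_add_distrib,
    Finset.sum_add_distrib, Finset.sum_ite_eq', Finset.sum_ite_eq', Finset.sum_ite_eq']
  simp

lemma exists_ne_zero_one {𝔽 : Type*} [Field 𝔽] [Fintype 𝔽] (hq2 : 2 < Fintype.card 𝔽) :
    ∃ c : 𝔽, c ≠ 0 ∧ c ≠ 1 := by
  classical
  by_contra h
  push_neg at h
  have hsub : (Finset.univ : Finset 𝔽) ⊆ {0, 1} := by
    intro x _
    by_cases hx : x = 0
    · simp [hx]
    · simp [h x hx]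
  have := Finset.card_le_card hsub
  have h2 : ({0, 1} : Finset 𝔽).card ≤ 2 := by
    apply le_trans (Finset.card_insert_le _ _)
    simp
  rw [Finset.card_univ] at this
  omega

/-- Key vanishing lemma: if the cycle form vanishes on all of `(𝔽ˣ)ⁿ`, then `α = 0`. -/
lemma cycSum_vanish {𝔽 : Type*} [Field 𝔽] [Fintype 𝔽] {n : ℕ} (hn : 3 ≤ n)
    (hq2 : 2 < Fintype.card 𝔽) (α : Fin n → 𝔽) (h : ∀ a : Fin n → 𝔽ˣ, cycSum α a = 0) :
    α = 0 := by
  obtain ⟨c, hc0, hc1⟩ := exists_ne_zero_one hq2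
  have hc1' : c - 1 ≠ 0 := sub_ne_zero.2 hc1
  set u : 𝔽ˣ := Units.mk0 c hc0 with hu
  have hucoe : (u : 𝔽) = c := rfl
  have hE0 : (∑ i, α i) = 0 := by
    have := h (fun _ => 1)
    unfold cycSum at this
    simpa using this
  have hE1 : ∀ j : Fin n, α j + α (cPred j) = 0 := by
    intro j
    have h1 := h (Function.update (fun _ => 1) j u)
    rw [cycSum_single hn α u j, hE0, hucoe] at h1
    have h2 : (c - 1) * (α j + α (cPred j)) = 0 := by linear_combination h1
    rcases mul_eq_zero.1 h2 with h3 | h3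
    · exact absurd h3 hc1'
    · exact h3
  funext j
  have h1 := h (Function.update (Function.update (fun _ => 1) j u) (cSucc j) u)
  rw [cycSum_double hn α u j, hE0, hucoe] at h1
  have hp : α (cPred j) = -α j := by linear_combination hE1 j
  have hs : α (cSucc j) = -α j := by
    have h4 := hE1 (cSucc j)
    rw [cPred_cSucc] at h4
    linear_combination h4
  rw [hp, hs] at h1
  have h2 : (c - 1)^2 * α j = 0 := by linear_combination h1
  rcases mul_eq_zero.1 h2 with h3 | h3
  · exact absurd (pow_eq_zero_iff (by norm_num) |>.1 h3) hc1'
  · simpa using h3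

/-- The evaluation linear map underlying `evalCode`. -/
noncomputable def evalMap (𝔽 : Type*) [Field 𝔽] (k : ℕ) (hk : 0 < k) :
    (Fin (2*k) → 𝔽) →ₗ[𝔽] (↥(cycX 𝔽 k hk) → 𝔽) where
  toFun := fun α P =>
    (∑ i, α i * Projectivization.rep (P : Projectivization 𝔽 (Fin (2*k) → 𝔽)) i) /
      Projectivization.rep (P : Projectivization 𝔽 (Fin (2*k) → 𝔽)) ⟨0, by omega⟩
  map_add' := by
    intro x y
    funext P
    simp [add_mul, Finset.sum_add_distrib, add_div]
  map_smul' := by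
    intro m x
    funext P
    simp only [Pi.smul_apply, smul_eq_mul, RingHom.id_apply]
    rw [← mul_div_assoc, Finset.mul_sum]
    congr 1
    apply Finset.sum_congr rfl
    intro i _
    ring

theorem stmt10 {𝔽 : Type*} [Field 𝔽] [Fintype 𝔽] (q k : ℕ)
    (hq : q = Fintype.card 𝔽) (hq2 : 2 < q) (hk : 2 ≤ k) :
    (∀ α : Fin (2*k) → 𝔽, (∀ a : Fin (2*k) → 𝔽ˣ, cycSum α a = 0) → α = 0) ∧
    Module.finrank 𝔽
      ↥(Submodule.span 𝔽 (evalCode 𝔽 k (Nat.lt_of_lt_of_le Nat.zero_lt_two hk))) = 2*k := by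
  have hcard : 2 < Fintype.card 𝔽 := hq ▸ hq2
  have hn3 : 3 ≤ 2*k := by omega
  have hk0 : 0 < k := by omega
  constructor
  · exact fun α h => cycSum_vanish hn3 hcard α h
  · have hkey : evalCode 𝔽 k (Nat.lt_of_lt_of_le Nat.zero_lt_two hk) =
        ↑(LinearMap.range (evalMap 𝔽 k (Nat.lt_of_lt_of_le Nat.zero_lt_two hk))) := by
      ext w
      constructor
      · rintro ⟨α, hα⟩
        exact ⟨α, (funext fun P => (hα P).symm)⟩
      · rintro ⟨α, rfl⟩
        exact ⟨α, fun P => rfl⟩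
    rw [hkey, Submodule.span_eq]
    have hinj : Function.Injective (evalMap 𝔽 k (Nat.lt_of_lt_of_le Nat.zero_lt_two hk)) := by
      rw [injective_iff_map_eq_zero]
      intro α hα
      apply cycSum_vanish hn3 hcard α
      intro x
      set P : ↥(cycX 𝔽 k (Nat.lt_of_lt_of_le Nat.zero_lt_two hk)) :=
        ⟨Projectivization.mk 𝔽 (cycVec x) (cycVec_ne_zero (by omega) x), ⟨x, rfl⟩⟩ with hP
      have h0 := congrFun hα P
      obtain ⟨a, ha⟩ := Projectivization.exists_smul_eq_mk_rep 𝔽 (cycVec x)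
        (cycVec_ne_zero (by omega) x)
      have hrep : Projectivization.rep (P : Projectivization 𝔽 (Fin (2*k) → 𝔽)) =
          fun i => (a : 𝔽) * cycVec x i := by
        funext i
        rw [show (P : Projectivization 𝔽 (Fin (2*k) → 𝔽)) =
            Projectivization.mk 𝔽 (cycVec x) (cycVec_ne_zero (by omega) x) from rfl, ← ha]
        simp [Units.smul_def]
      simp only [evalMap, LinearMap.coe_mk, AddHom.coe_mk, Pi.zero_apply, hrep] at h0
      have hden : (a : 𝔽) * cycVec x ⟨0, by omega⟩ ≠ 0 :=
        mul_ne_zero (Units.ne_zero a)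
          (mul_ne_zero (Units.ne_zero _) (Units.ne_zero _))
      rw [div_eq_zero_iff] at h0
      rcases h0 with h0 | h0
      · have hsum : (∑ i, α i * ((a:𝔽) * cycVec x i)) = (a:𝔽) * cycSum α x := by
          rw [cycSum, Finset.mul_sum]
          apply Finset.sum_congr rfl
          intro i _
          simp [cycVec]
          ring
        rw [hsum] at h0
        rcases mul_eq_zero.1 h0 with h1 | h1
        · exact absurd h1 (Units.ne_zero a)
        · exact h1
      · exact absurd h0 hden
    rw [LinearMap.finrank_range_of_inj hinj, Module.finrank_fin_fun]
end

section
/- Let 𝔽 be a finite field with q = |𝔽| elements, q > 2, and let n ≥ 1. Let j ∈ {1,…,n} and let g, h ∈ 𝔽[x_1,…,x_n] be polynomials in which the variable x_j does not occur, and set f = g + h·x_j. Then z(f) = (q/(q-1))·z(g,h) + (q-1)^{n-1} − z(g)/(q-1) − z(h)/(q-1), where z(f_1,…,f_ℓ) denotes the number of points a ∈ (𝔽*)^n at which all f_i vanish. -/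
open Finset MvPolynomial

private lemma eval_update_of_not_mem_vars {𝔽 : Type*} [Field 𝔽] {n : ℕ} {j : Fin n}
    {p : MvPolynomial (Fin n) 𝔽} (hp : j ∉ p.vars) (x : Fin n → 𝔽) (t : 𝔽) :
    MvPolynomial.eval (Function.update x j t) p = MvPolynomial.eval x p := by
  show eval₂Hom (RingHom.id 𝔽) _ p = eval₂Hom (RingHom.id 𝔽) _ p
  apply MvPolynomial.eval₂Hom_congr' rfl _ rfl
  intro i hi _
  have : i ≠ j := fun e => hp (e ▸ hi)
  simp [Function.update_of_ne this]

private lemma unit_sum_ite {𝔽 : Type*} [Field 𝔽] [Fintype 𝔽] [DecidableEq 𝔽] (u v : 𝔽) :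
    (∑ t : 𝔽ˣ, if u + v * t = 0 then (1 : ℚ) else 0)
      = (Fintype.card 𝔽 : ℚ) * (if u = 0 ∧ v = 0 then 1 else 0) + 1
        - (if u = 0 then 1 else 0) - (if v = 0 then 1 else 0) := by
  classical
  by_cases hv : v = 0
  · subst hv
    by_cases hu : u = 0
    · subst hu
      simp [Finset.card_univ, Fintype.card_units]
      have h1 : (1 : ℚ) ≤ Fintype.card 𝔽 := by exact_mod_cast Fintype.card_pos
      push_cast [Nat.cast_sub Fintype.card_pos]
      ring
    · simp [hu]
  · by_cases hu : u = 0
    · subst hu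
      have : ∀ t : 𝔽ˣ, ¬ ((0 : 𝔽) + v * t = 0) := by
        intro t ht
        rw [zero_add, mul_eq_zero] at ht
        rcases ht with ht | ht
        · exact hv ht
        · exact t.ne_zero ht
      simp [this, hv]
    · have hval : (-u / v) ≠ 0 := by
        simp [div_eq_zero_iff, hu, hv]
      set t₀ : 𝔽ˣ := Units.mk0 (-u / v) hval with ht₀
      have key : ∀ t : 𝔽ˣ, (u + v * t = 0) ↔ t = t₀ := by
        intro t
        constructor
        · intro hteq
          have : (t : 𝔽) = -u / v := by field_simp; linear_combination hteq
          exact Units.ext (by simp [ht₀, this])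
        · intro hteq
          subst hteq
          simp only [ht₀, Units.val_mk0]
          field_simp
          ring
      simp only [key]
      simp [Finset.sum_ite_eq', hu, hv]

theorem stmt11 {𝔽 : Type*} [Field 𝔽] [Fintype 𝔽] (q n : ℕ)
    (hq : q = Fintype.card 𝔽) (hq2 : 2 < q) (hn : 1 ≤ n)
    (j : Fin n) (g h : MvPolynomial (Fin n) 𝔽)
    (hg : j ∉ g.vars) (hh : j ∉ h.vars) :
    (Nat.card {a : Fin n → 𝔽ˣ //
        MvPolynomial.eval (fun i => (a i : 𝔽)) (g + h * MvPolynomial.X j) = 0} : ℚ)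
      = ((q : ℚ) / ((q : ℚ) - 1)) *
          Nat.card {a : Fin n → 𝔽ˣ //
            MvPolynomial.eval (fun i => (a i : 𝔽)) g = 0 ∧
            MvPolynomial.eval (fun i => (a i : 𝔽)) h = 0}
        + ((q : ℚ) - 1) ^ (n - 1)
        - (Nat.card {a : Fin n → 𝔽ˣ // MvPolynomial.eval (fun i => (a i : 𝔽)) g = 0} : ℚ) /
            ((q : ℚ) - 1)
        - (Nat.card {a : Fin n → 𝔽ˣ // MvPolynomial.eval (fun i => (a i : 𝔽)) h = 0} : ℚ) /
            ((q : ℚ) - 1) := by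
  classical
  have hq1 : 1 ≤ q := by omega
  have hcard : Fintype.card 𝔽ˣ = q - 1 := by simpa [hq] using Fintype.card_units (α := 𝔽)
  have hcardQ : ((Fintype.card 𝔽ˣ : ℕ) : ℚ) = (q : ℚ) - 1 := by
    rw [hcard, Nat.cast_sub hq1]; norm_num
  -- counting helper
  have count : ∀ (P : (Fin n → 𝔽ˣ) → Prop),
      (Nat.card {a : Fin n → 𝔽ˣ // P a} : ℚ)
        = ∑ a : Fin n → 𝔽ˣ, if P a then (1 : ℚ) else 0 := by
    intro P
    rw [Finset.sum_boole, Nat.card_eq_fintype_card, Fintype.card_subtype]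
  set Eg : (Fin n → 𝔽ˣ) → 𝔽 := fun a => MvPolynomial.eval (fun i => (a i : 𝔽)) g with hEg
  set Eh : (Fin n → 𝔽ˣ) → 𝔽 := fun a => MvPolynomial.eval (fun i => (a i : 𝔽)) h with hEh
  set F : (Fin n → 𝔽ˣ) → 𝔽 :=
    fun a => MvPolynomial.eval (fun i => (a i : 𝔽)) (g + h * MvPolynomial.X j) with hF
  -- the involutive pairing
  have einv : ∀ p : (Fin n → 𝔽ˣ) × 𝔽ˣ,
      ((Function.update (Function.update p.1 j p.2) j (p.1 j)),
        (Function.update p.1 j p.2) j) = p := by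
    rintro ⟨a, t⟩
    simp [Function.update_idem]
  let e : ((Fin n → 𝔽ˣ) × 𝔽ˣ) ≃ ((Fin n → 𝔽ˣ) × 𝔽ˣ) :=
    ⟨fun p => (Function.update p.1 j p.2, p.1 j),
     fun p => (Function.update p.1 j p.2, p.1 j), einv, einv⟩
  have hFupdate : ∀ (a : Fin n → 𝔽ˣ) (t : 𝔽ˣ),
      F (Function.update a j t) = Eg a + Eh a * (t : 𝔽) := by
    intro a t
    have hcomp : (fun i => ((Function.update a j t i : 𝔽ˣ) : 𝔽))
        = Function.update (fun i => (a i : 𝔽)) j (t : 𝔽) := by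
      funext i
      by_cases hi : i = j
      · subst hi; simp
      · simp [Function.update_of_ne hi]
    simp only [hF, hcomp, map_add, map_mul, MvPolynomial.eval_X, Function.update_self,
      eval_update_of_not_mem_vars hg, eval_update_of_not_mem_vars hh]
    rfl
  -- key double counting identity
  have key1 : ((q : ℚ) - 1) * (∑ a : Fin n → 𝔽ˣ, if F a = 0 then (1 : ℚ) else 0)
      = ∑ a : Fin n → 𝔽ˣ, ∑ t : 𝔽ˣ, if Eg a + Eh a * (t : 𝔽) = 0 then (1 : ℚ) else 0 := by
    have step1 : ((q : ℚ) - 1) * (∑ a : Fin n → 𝔽ˣ, if F a = 0 then (1 : ℚ) else 0)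
        = ∑ p : (Fin n → 𝔽ˣ) × 𝔽ˣ, if F p.1 = 0 then (1 : ℚ) else 0 := by
      rw [Fintype.sum_prod_type, Finset.mul_sum]
      refine Finset.sum_congr rfl fun a _ => ?_
      have : (∑ y : 𝔽ˣ, if F (a, y).1 = 0 then (1 : ℚ) else 0)
          = ∑ _y : 𝔽ˣ, if F a = 0 then (1 : ℚ) else 0 := rfl
      rw [this, Finset.sum_const, Finset.card_univ, nsmul_eq_mul, hcardQ]
    have step2 : ∑ p : (Fin n → 𝔽ˣ) × 𝔽ˣ, (if F p.1 = 0 then (1 : ℚ) else 0)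
        = ∑ p : (Fin n → 𝔽ˣ) × 𝔽ˣ, if F (e p).1 = 0 then (1 : ℚ) else 0 :=
      (Equiv.sum_comp e (fun p => if F p.1 = 0 then (1 : ℚ) else 0)).symm
    rw [step1, step2, Fintype.sum_prod_type]
    refine Finset.sum_congr rfl fun a _ => Finset.sum_congr rfl fun t _ => ?_
    simp only [e, Equiv.coe_fn_mk, hFupdate a t]
  -- pointwise evaluation of inner sum
  have key2 : ∑ a : Fin n → 𝔽ˣ, ∑ t : 𝔽ˣ, (if Eg a + Eh a * (t : 𝔽) = 0 then (1 : ℚ) else 0)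
      = (q : ℚ) * (∑ a : Fin n → 𝔽ˣ, if Eg a = 0 ∧ Eh a = 0 then (1 : ℚ) else 0)
        + ((q : ℚ) - 1) ^ n
        - (∑ a : Fin n → 𝔽ˣ, if Eg a = 0 then (1 : ℚ) else 0)
        - (∑ a : Fin n → 𝔽ˣ, if Eh a = 0 then (1 : ℚ) else 0) := by
    have hcardfun : ((Fintype.card (Fin n → 𝔽ˣ) : ℕ) : ℚ) = ((q : ℚ) - 1) ^ n := by
      rw [Fintype.card_fun, Fintype.card_fin, ← hcardQ]
      push_cast
      ring
    have := fun a : Fin n → 𝔽ˣ => unit_sum_ite (𝔽 := 𝔽) (Eg a) (Eh a)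
    simp only [this, ← hq]
    rw [Finset.sum_sub_distrib, Finset.sum_sub_distrib, Finset.sum_add_distrib,
      ← Finset.mul_sum, Finset.sum_const, Finset.card_univ, nsmul_eq_mul, mul_one, hcardfun]
  have main : ((q : ℚ) - 1) * (∑ a : Fin n → 𝔽ˣ, if F a = 0 then (1 : ℚ) else 0)
      = (q : ℚ) * (∑ a : Fin n → 𝔽ˣ, if Eg a = 0 ∧ Eh a = 0 then (1 : ℚ) else 0)
        + ((q : ℚ) - 1) ^ n
        - (∑ a : Fin n → 𝔽ˣ, if Eg a = 0 then (1 : ℚ) else 0)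
        - (∑ a : Fin n → 𝔽ˣ, if Eh a = 0 then (1 : ℚ) else 0) := key1.trans key2
  have hzf : (Nat.card {a : Fin n → 𝔽ˣ //
      MvPolynomial.eval (fun i => (a i : 𝔽)) (g + h * MvPolynomial.X j) = 0} : ℚ)
      = ∑ a : Fin n → 𝔽ˣ, if F a = 0 then (1 : ℚ) else 0 := by refine (count _).trans (Finset.sum_congr rfl fun a _ => ?_); congr
  have hzgh : (Nat.card {a : Fin n → 𝔽ˣ //
      MvPolynomial.eval (fun i => (a i : 𝔽)) g = 0 ∧
      MvPolynomial.eval (fun i => (a i : 𝔽)) h = 0} : ℚ)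
      = ∑ a : Fin n → 𝔽ˣ, if Eg a = 0 ∧ Eh a = 0 then (1 : ℚ) else 0 := by refine (count _).trans (Finset.sum_congr rfl fun a _ => ?_); congr
  have hzg : (Nat.card {a : Fin n → 𝔽ˣ //
      MvPolynomial.eval (fun i => (a i : 𝔽)) g = 0} : ℚ)
      = ∑ a : Fin n → 𝔽ˣ, if Eg a = 0 then (1 : ℚ) else 0 := by refine (count _).trans (Finset.sum_congr rfl fun a _ => ?_); congr
  have hzh : (Nat.card {a : Fin n → 𝔽ˣ //
      MvPolynomial.eval (fun i => (a i : 𝔽)) h = 0} : ℚ)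
      = ∑ a : Fin n → 𝔽ˣ, if Eh a = 0 then (1 : ℚ) else 0 := by refine (count _).trans (Finset.sum_congr rfl fun a _ => ?_); congr
  rw [hzf, hzgh, hzg, hzh]
  have hc : (q : ℚ) - 1 ≠ 0 := by
    have : (2 : ℚ) < q := by exact_mod_cast hq2
    linarith
  set A := ∑ a : Fin n → 𝔽ˣ, if F a = 0 then (1 : ℚ) else 0 with hA
  set B := ∑ a : Fin n → 𝔽ˣ, if Eg a = 0 ∧ Eh a = 0 then (1 : ℚ) else 0 with hB
  set C := ∑ a : Fin n → 𝔽ˣ, if Eg a = 0 then (1 : ℚ) else 0 with hC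
  set D := ∑ a : Fin n → 𝔽ˣ, if Eh a = 0 then (1 : ℚ) else 0 with hD
  have hpow : ((q : ℚ) - 1) ^ n = ((q : ℚ) - 1) ^ (n - 1) * ((q : ℚ) - 1) := by
    conv_lhs => rw [← Nat.succ_pred_eq_of_pos hn]
    rw [pow_succ]
    rfl
  field_simp
  linear_combination main + hpow
end

section
/- Let q ≥ 3 and k ≥ 2 be integers. Then (q-1)^{2k-2} > q^k(q-2) if and only if k ≥ 5, or (k = 4 and q ≥ 4). -/
lemma auxA (q : ℤ) (hq : 3 ≤ q) : ∀ k : ℕ, 5 ≤ k →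
    (q - 1) ^ (2*k - 2) > q ^ k * (q - 2) := by
  intro k hk
  induction k, hk using Nat.le_induction with
  | base =>
      norm_num
      nlinarith [sq_nonneg (q-3), sq_nonneg q, sq_nonneg (q*(q-3)), sq_nonneg ((q-1)^2*(q-3)), pow_pos (by linarith : (0:ℤ) < q - 1) 4, pow_pos (by linarith : (0:ℤ) < q) 3]
  | succ n hn ih =>
      have h1 : 2*(n+1) - 2 = (2*n - 2) + 2 := by omega
      rw [h1, pow_add, pow_succ q n]
      have hq2 : q ≤ (q-1)^2 := by nlinarith
      have hpos : (0:ℤ) < q ^ n * (q - 2) := by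
        apply mul_pos (pow_pos (by linarith) n) (by linarith)
      calc q ^ n * q * (q - 2) = (q ^ n * (q-2)) * q := by ring
        _ ≤ (q ^ n * (q-2)) * (q-1)^2 := by nlinarith
        _ < (q-1)^(2*n-2) * (q-1)^2 := by
            have : (0:ℤ) < (q-1)^2 := pow_pos (by linarith) 2
            nlinarith

theorem stmt13 (q k : ℕ) (hq : 3 ≤ q) (hk : 2 ≤ k) :
    ((q : ℤ) - 1) ^ (2*k - 2) > (q : ℤ) ^ k * ((q : ℤ) - 2) ↔
      5 ≤ k ∨ (k = 4 ∧ 4 ≤ q) := by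
  have hq' : (3:ℤ) ≤ (q:ℤ) := by exact_mod_cast hq
  constructor
  · intro h
    by_contra hc
    push_neg at hc
    obtain ⟨h5, h4⟩ := hc
    interval_cases k
    · norm_num at h; nlinarith
    · norm_num at h
      nlinarith [mul_nonneg (mul_nonneg (by linarith : (0:ℤ) ≤ (q:ℤ)) (by linarith : (0:ℤ) ≤ (q:ℤ))) (by linarith : (0:ℤ) ≤ (q:ℤ)-3)]
    · have hq3 : q < 4 := h4 rfl
      have : q = 3 := by omega
      subst this
      norm_num at h
  · rintro (h5 | ⟨rfl, hq4⟩)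
    · exact auxA q hq' k h5
    · have hq4' : (4:ℤ) ≤ (q:ℤ) := by exact_mod_cast hq4
      norm_num
      nlinarith [pow_pos (by linarith : (0:ℤ) < (q:ℤ)) 2, sq_nonneg ((q:ℤ)-4), sq_nonneg ((q:ℤ)*((q:ℤ)-4)), sq_nonneg ((q:ℤ)-1)]
end

section
/- Let 𝔽 be a finite field with q = |𝔽| > 2 elements. Let X ⊆ ℙ^3(𝔽) be the projective toric subset parameterized by the 4-cycle C_4, and let C = C_X(1) ⊆ 𝔽^m, m = (q-1)^2, be the parameterized evaluation code of order 1. Then the minimum distance of C equals (q-2)^2. -/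
/-- Hamming weight of a word. -/
noncomputable def wt {𝔽 : Type*} [Field 𝔽] {ι : Type*} (w : ι → 𝔽) : ℕ := Nat.card {i : ι // w i ≠ 0}

namespace Stmt15Aux

variable {𝔽 : Type*} [Field 𝔽]

def i0 : Fin (2*2) := ⟨0, by omega⟩
def i1 : Fin (2*2) := ⟨1, by omega⟩
def i2 : Fin (2*2) := ⟨2, by omega⟩
def i3 : Fin (2*2) := ⟨3, by omega⟩

def extv (a b : 𝔽ˣ) : Fin (2*2) → 𝔽ˣ := ![1, 1, a, b]

lemma cyc0 (a b : 𝔽ˣ) : cycVec (extv a b) i0 = 1 * 1 := rfl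
lemma cyc1 (a b : 𝔽ˣ) : cycVec (extv a b) i1 = 1 * (a:𝔽) := rfl
lemma cyc2 (a b : 𝔽ˣ) : cycVec (extv a b) i2 = (a:𝔽) * b := rfl
lemma cyc3 (a b : 𝔽ˣ) : cycVec (extv a b) i3 = (b:𝔽) * 1 := rfl

lemma sum4 (g : Fin (2*2) → 𝔽) : ∑ i, g i = g i0 + g i1 + g i2 + g i3 :=
  Fin.sum_univ_four g

lemma cx0 (x : Fin (2*2) → 𝔽ˣ) : cycVec x i0 = (x i0 : 𝔽) * x i1 := rfl
lemma cx1 (x : Fin (2*2) → 𝔽ˣ) : cycVec x i1 = (x i1 : 𝔽) * x i2 := rfl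
lemma cx2 (x : Fin (2*2) → 𝔽ˣ) : cycVec x i2 = (x i2 : 𝔽) * x i3 := rfl
lemma cx3 (x : Fin (2*2) → 𝔽ˣ) : cycVec x i3 = (x i3 : 𝔽) * x i0 := rfl

lemma fin4_cases (i : Fin (2*2)) : i = i0 ∨ i = i1 ∨ i = i2 ∨ i = i3 := by
  rcases i with ⟨v, hv⟩
  interval_cases v
  · exact Or.inl rfl
  · exact Or.inr (Or.inl rfl)
  · exact Or.inr (Or.inr (Or.inl rfl))
  · exact Or.inr (Or.inr (Or.inr rfl))

noncomputable def mkE (p : 𝔽ˣ × 𝔽ˣ) : ↥(cycX 𝔽 2 Nat.zero_lt_two) :=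
  ⟨Projectivization.mk 𝔽 (cycVec (extv p.1 p.2)) (cycVec_ne_zero (by omega) _),
    ⟨extv p.1 p.2, rfl⟩⟩

lemma mkE_inj : Function.Injective (mkE (𝔽 := 𝔽)) := by
  rintro ⟨a, b⟩ ⟨a', b'⟩ h
  have h' : Projectivization.mk 𝔽 (cycVec (extv a b)) (cycVec_ne_zero (by omega) _) =
      Projectivization.mk 𝔽 (cycVec (extv a' b')) (cycVec_ne_zero (by omega) _) :=
    congrArg Subtype.val h
  obtain ⟨c, hc⟩ := (Projectivization.mk_eq_mk_iff 𝔽 _ _ _ _).mp h'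
  have h0 : (c : 𝔽) * (1 * 1) = 1 * 1 := by
    have := congrFun hc i0
    simpa [cyc0, Units.smul_def] using this
  have hc1 : (c : 𝔽) = 1 := by simpa using h0
  have h1 : (c : 𝔽) * (1 * (a' : 𝔽)) = 1 * (a : 𝔽) := by
    have := congrFun hc i1
    simpa [cyc1, Units.smul_def] using this
  have h3 : (c : 𝔽) * ((b' : 𝔽) * 1) = (b : 𝔽) * 1 := by
    have := congrFun hc i3
    simpa [cyc3, Units.smul_def] using this
  have ha : a = a' := by ext; rw [hc1] at h1; simpa using h1.symm
  have hb : b = b' := by ext; rw [hc1] at h3; simpa using h3.symm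
  simp [ha, hb]

lemma mkE_surj : Function.Surjective (mkE (𝔽 := 𝔽)) := by
  rintro ⟨P, x, rfl⟩
  refine ⟨(x i2 * (x i0)⁻¹, x i3 * (x i1)⁻¹), ?_⟩
  refine Subtype.ext ?_
  show Projectivization.mk 𝔽 _ _ = Projectivization.mk 𝔽 _ _
  rw [Projectivization.mk_eq_mk_iff]
  refine ⟨(x i0 * x i1)⁻¹, ?_⟩
  funext i
  have h0 : (x i0 : 𝔽) ≠ 0 := Units.ne_zero _
  have h1 : (x i1 : 𝔽) ≠ 0 := Units.ne_zero _
  rcases fin4_cases i with rfl | rfl | rfl | rfl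
  · show ((x i0 * x i1)⁻¹ : 𝔽ˣ) • (cycVec x i0) = cycVec (extv _ _) i0
    rw [cx0, cyc0, Units.smul_def, smul_eq_mul]
    push_cast
    field_simp
  · show ((x i0 * x i1)⁻¹ : 𝔽ˣ) • (cycVec x i1) = cycVec (extv _ _) i1
    rw [cx1, cyc1, Units.smul_def, smul_eq_mul]
    push_cast
    field_simp
    try ring
  · show ((x i0 * x i1)⁻¹ : 𝔽ˣ) • (cycVec x i2) = cycVec (extv _ _) i2
    rw [cx2, cyc2, Units.smul_def, smul_eq_mul]
    push_cast
    field_simp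
    try ring
  · show ((x i0 * x i1)⁻¹ : 𝔽ˣ) • (cycVec x i3) = cycVec (extv _ _) i3
    rw [cx3, cyc3, Units.smul_def, smul_eq_mul]
    push_cast
    field_simp
    try ring

noncomputable def mkEquiv : (𝔽ˣ × 𝔽ˣ) ≃ ↥(cycX 𝔽 2 Nat.zero_lt_two) :=
  Equiv.ofBijective mkE ⟨mkE_inj, mkE_surj⟩

def Gf (α : Fin (2*2) → 𝔽) (p : 𝔽ˣ × 𝔽ˣ) : 𝔽 :=
  α i0 + α i1 * p.1 + α i2 * (p.1 * p.2) + α i3 * p.2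

lemma eval_formula (α : Fin (2*2) → 𝔽) (p : 𝔽ˣ × 𝔽ˣ) :
    (∑ i, α i * Projectivization.rep
        ((mkE p : ↥(cycX 𝔽 2 Nat.zero_lt_two)) : Projectivization 𝔽 (Fin (2*2) → 𝔽)) i) /
      Projectivization.rep
        ((mkE p : ↥(cycX 𝔽 2 Nat.zero_lt_two)) : Projectivization 𝔽 (Fin (2*2) → 𝔽))
        ⟨0, by omega⟩ = Gf α p := by
  obtain ⟨a, b⟩ := p
  set P : Projectivization 𝔽 (Fin (2*2) → 𝔽) :=
    ((mkE (a, b) : ↥(cycX 𝔽 2 Nat.zero_lt_two)) : Projectivization 𝔽 (Fin (2*2) → 𝔽)) with hPdef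
  have hmk : Projectivization.mk 𝔽 P.rep P.rep_nonzero =
      Projectivization.mk 𝔽 (cycVec (extv a b)) (cycVec_ne_zero (by omega) _) := by
    rw [Projectivization.mk_rep]; rfl
  obtain ⟨c, hc⟩ := (Projectivization.mk_eq_mk_iff 𝔽 _ _ _ _).mp hmk
  have r : ∀ i, P.rep i = (c : 𝔽) * cycVec (extv a b) i := fun i => by
    rw [← hc]; rfl
  show (∑ i, α i * P.rep i) / P.rep i0 = Gf α (a, b)
  rw [sum4 (fun i => α i * P.rep i)]
  simp only [r i0, r i1, r i2, r i3, cyc0, cyc1, cyc2, cyc3]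
  have hc0 : (c : 𝔽) * (1 * 1) ≠ 0 := by simpa using c.ne_zero
  rw [div_eq_iff hc0]
  simp only [Gf]
  ring

lemma wt_eq [Fintype 𝔽] (α : Fin (2*2) → 𝔽) (w : ↥(cycX 𝔽 2 Nat.zero_lt_two) → 𝔽)
    (hw : ∀ P : ↥(cycX 𝔽 2 Nat.zero_lt_two),
      w P = (∑ i, α i * Projectivization.rep
          ((P : Projectivization 𝔽 (Fin (2*2) → 𝔽))) i) /
        Projectivization.rep ((P : Projectivization 𝔽 (Fin (2*2) → 𝔽))) ⟨0, by omega⟩) :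
    wt w = Nat.card {p : 𝔽ˣ × 𝔽ˣ // Gf α p ≠ 0} := by
  have hval : ∀ p : 𝔽ˣ × 𝔽ˣ, w (mkE p) = Gf α p := by
    intro p
    rw [hw (mkE p)]
    exact eval_formula α p
  refine Nat.card_congr (Equiv.symm ?_)
  exact (mkEquiv).subtypeEquiv fun p => by rw [show mkEquiv p = mkE p from rfl, hval p]

open Finset in
lemma lin_card [Fintype 𝔽] {c d : 𝔽} (h : ¬(c = 0 ∧ d = 0)) :
    Fintype.card 𝔽 - 2 ≤ Nat.card {a : 𝔽ˣ // c * a + d ≠ 0} := by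
  classical
  rw [Nat.card_eq_fintype_card, Fintype.card_subtype]
  have hle : (univ.filter fun a : 𝔽ˣ => c * (a : 𝔽) + d = 0).card ≤ 1 := by
    refine Finset.card_le_one.mpr ?_
    intro a ha a' ha'
    simp only [mem_filter, mem_univ, true_and] at ha ha'
    by_cases hc : c = 0
    · exact absurd ⟨hc, by simpa [hc] using ha⟩ h
    · ext
      have : c * (a : 𝔽) = c * a' := by linear_combination ha - ha'
      exact mul_left_cancel₀ hc this
  have hsplit : (univ.filter fun a : 𝔽ˣ => c * (a : 𝔽) + d = 0).card
      + (univ.filter fun a : 𝔽ˣ => ¬(c * (a : 𝔽) + d = 0)).card = Fintype.card 𝔽ˣ := by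
    rw [Finset.card_filter_add_card_filter_not, Finset.card_univ]
  have hcu : Fintype.card 𝔽ˣ = Fintype.card 𝔽 - 1 := by
    rw [← Nat.card_eq_fintype_card, ← Nat.card_eq_fintype_card, Nat.card_units]
  have : (univ.filter fun a : 𝔽ˣ => ¬(c * (a : 𝔽) + d = 0)).card
      ≥ Fintype.card 𝔽 - 2 := by omega
  simpa [ne_eq] using this

open Finset in
lemma main_count [Fintype 𝔽] (α : Fin (2*2) → 𝔽) (hα : ∃ p : 𝔽ˣ × 𝔽ˣ, Gf α p ≠ 0) :
    (Fintype.card 𝔽 - 2) ^ 2 ≤ Nat.card {p : 𝔽ˣ × 𝔽ˣ // Gf α p ≠ 0} := by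
  classical
  rw [Nat.card_eq_fintype_card, Fintype.card_subtype]
  set q := Fintype.card 𝔽 with hqdef
  -- fiberwise decomposition
  have hfib : (univ.filter fun p : 𝔽ˣ × 𝔽ˣ => Gf α p ≠ 0).card
      = ∑ b : 𝔽ˣ, (univ.filter fun a : 𝔽ˣ => Gf α (a, b) ≠ 0).card := by
    rw [Finset.card_eq_sum_card_fiberwise
      (f := Prod.snd) (t := (univ : Finset 𝔽ˣ)) (fun x _ => Finset.mem_univ _)]
    refine Finset.sum_congr rfl fun b _ => ?_
    refine Finset.card_bij' (fun p _ => p.1) (fun a _ => (a, b)) ?_ ?_ ?_ ?_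
    · rintro ⟨a, b'⟩ hp
      simp only [mem_filter, mem_univ, true_and] at hp ⊢
      obtain ⟨h1, h2⟩ := hp
      subst h2
      exact h1
    · intro a ha
      simp only [mem_filter, mem_univ, true_and] at ha ⊢
      exact ⟨ha, trivial⟩
    · rintro ⟨a, b'⟩ hp
      simp only [mem_filter] at hp
      simp [hp.2]
    · intro a ha; rfl
  rw [hfib]
  -- the set of good rows
  set B : Finset 𝔽ˣ :=
    univ.filter (fun b : 𝔽ˣ => ¬(α i1 + α i2 * b = 0 ∧ α i0 + α i3 * b = 0)) with hBdef
  have hrow : ∀ b ∈ B, q - 2 ≤ (univ.filter fun a : 𝔽ˣ => Gf α (a, b) ≠ 0).card := by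
    intro b hb
    simp only [hBdef, mem_filter, mem_univ, true_and] at hb
    have hrw : ∀ a : 𝔽ˣ, (Gf α (a, b) ≠ 0)
        = ((α i1 + α i2 * b) * a + (α i0 + α i3 * b) ≠ 0) := by
      intro a
      have : Gf α (a, b) = (α i1 + α i2 * b) * a + (α i0 + α i3 * b) := by
        simp only [Gf]; ring
      rw [this]
    simp only [hrw]
    have := lin_card (𝔽 := 𝔽) hb
    rw [Nat.card_eq_fintype_card, Fintype.card_subtype] at this
    convert this using 2
  have hB : q - 2 ≤ B.card := by
    have hcompl : (univ.filter
        (fun b : 𝔽ˣ => α i1 + α i2 * b = 0 ∧ α i0 + α i3 * b = 0)).card ≤ 1 := by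
      refine Finset.card_le_one.mpr ?_
      intro b hb b' hb'
      simp only [mem_filter, mem_univ, true_and] at hb hb'
      by_contra hne
      have hbb : (b : 𝔽) ≠ b' := fun h => hne (Units.ext h)
      have h2 : α i2 = 0 := by
        have : α i2 * ((b : 𝔽) - b') = 0 := by linear_combination hb.1 - hb'.1
        rcases mul_eq_zero.mp this with h | h
        · exact h
        · exact absurd (sub_eq_zero.mp h) hbb
      have h1 : α i1 = 0 := by
        have := hb.1; rw [h2] at this; simpa using this
      have h3 : α i3 = 0 := by
        have : α i3 * ((b : 𝔽) - b') = 0 := by linear_combination hb.2 - hb'.2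
        rcases mul_eq_zero.mp this with h | h
        · exact h
        · exact absurd (sub_eq_zero.mp h) hbb
      have h0 : α i0 = 0 := by
        have := hb.2; rw [h3] at this; simpa using this
      obtain ⟨p, hp⟩ := hα
      exact hp (by simp [Gf, h0, h1, h2, h3])
    have hsplit : (univ.filter
        (fun b : 𝔽ˣ => α i1 + α i2 * b = 0 ∧ α i0 + α i3 * b = 0)).card + B.card
        = Fintype.card 𝔽ˣ := by
      rw [hBdef, Finset.card_filter_add_card_filter_not, Finset.card_univ]
    have hcu : Fintype.card 𝔽ˣ = q - 1 := by
      rw [hqdef, ← Nat.card_eq_fintype_card (α := 𝔽ˣ), Nat.card_units, Nat.card_eq_fintype_card]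
    omega
  calc (q - 2) ^ 2 = (q - 2) * (q - 2) := sq (q - 2)
    _ ≤ B.card * (q - 2) := Nat.mul_le_mul_right _ hB
    _ = ∑ _b ∈ B, (q - 2) := by rw [Finset.sum_const, smul_eq_mul]
    _ ≤ ∑ b ∈ B, (univ.filter fun a : 𝔽ˣ => Gf α (a, b) ≠ 0).card :=
        Finset.sum_le_sum hrow
    _ ≤ ∑ b : 𝔽ˣ, (univ.filter fun a : 𝔽ˣ => Gf α (a, b) ≠ 0).card :=
        Finset.sum_le_sum_of_subset (Finset.subset_univ B)

end Stmt15Aux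


open Stmt15Aux in
theorem stmt15 {𝔽 : Type*} [Field 𝔽] [Fintype 𝔽] (q : ℕ)
    (hq : q = Fintype.card 𝔽) (hq2 : 2 < q) :
    Nat.card ↥(cycX 𝔽 2 Nat.zero_lt_two) = (q - 1) ^ 2 ∧
    IsLeast {d : ℕ | ∃ w ∈ evalCode 𝔽 2 Nat.zero_lt_two, w ≠ 0 ∧ wt w = d} ((q - 2) ^ 2) := by
  classical
  have hcu : Fintype.card 𝔽ˣ = q - 1 := by
    rw [← Nat.card_eq_fintype_card (α := 𝔽ˣ), Nat.card_units, Nat.card_eq_fintype_card, hq]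
  have hcX : Nat.card ↥(cycX 𝔽 2 Nat.zero_lt_two) = (q - 1) ^ 2 := by
    rw [← Nat.card_congr (mkEquiv (𝔽 := 𝔽)), Nat.card_prod, Nat.card_eq_fintype_card, hcu, sq]
  refine ⟨hcX, ?_, ?_⟩
  · -- membership : there is a nonzero codeword of weight (q-2)^2
    set αw : Fin (2*2) → 𝔽 := ![1, -1, 1, -1] with hαwdef
    set w : ↥(cycX 𝔽 2 Nat.zero_lt_two) → 𝔽 := fun P =>
      (∑ i, αw i * Projectivization.rep ((P : Projectivization 𝔽 (Fin (2*2) → 𝔽))) i) /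
        Projectivization.rep ((P : Projectivization 𝔽 (Fin (2*2) → 𝔽))) ⟨0, by omega⟩ with hwdef
    have hwprop : ∀ P : ↥(cycX 𝔽 2 Nat.zero_lt_two),
        w P = (∑ i, αw i * Projectivization.rep
            ((P : Projectivization 𝔽 (Fin (2*2) → 𝔽))) i) /
          Projectivization.rep ((P : Projectivization 𝔽 (Fin (2*2) → 𝔽))) ⟨0, by omega⟩ :=
      fun P => rfl
    have hwmem : w ∈ evalCode 𝔽 2 Nat.zero_lt_two := ⟨αw, hwprop⟩
    have hGw : ∀ p : 𝔽ˣ × 𝔽ˣ, Gf αw p = ((p.1 : 𝔽) - 1) * ((p.2 : 𝔽) - 1) := by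
      intro p
      have h : Gf αw p = 1 + (-1) * (p.1 : 𝔽) + 1 * ((p.1 : 𝔽) * (p.2 : 𝔽)) + (-1) * (p.2 : 𝔽) :=
        rfl
      rw [h]; ring
    have hval : ∀ p : 𝔽ˣ × 𝔽ˣ, w (mkE p) = Gf αw p := by
      intro p
      rw [hwprop (mkE p)]
      exact eval_formula αw p
    have hnt : Nontrivial 𝔽ˣ := by
      refine Fintype.one_lt_card_iff_nontrivial.mp ?_
      omega
    obtain ⟨u, hu⟩ := exists_ne (1 : 𝔽ˣ)
    have hu1 : (u : 𝔽) ≠ 1 := fun h' => hu (Units.ext h')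
    have hw0 : w ≠ 0 := by
      intro h
      have h2 := congrFun h (mkE (u, u))
      rw [hval (u, u), hGw] at h2
      simp only [Pi.zero_apply] at h2
      rcases mul_eq_zero.mp h2 with h3 | h3 <;> exact hu1 (by linear_combination h3)
    have hwt : wt w = (q - 2) ^ 2 := by
      rw [wt_eq αw w hwprop, Nat.card_eq_fintype_card, Fintype.card_subtype]
      have hiff : ∀ p : 𝔽ˣ × 𝔽ˣ, Gf αw p ≠ 0 ↔ (p.1 ≠ 1 ∧ p.2 ≠ 1) := by
        intro p
        rw [hGw p]
        simp [mul_ne_zero_iff, sub_ne_zero, Units.val_eq_one]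
      rw [show (Finset.univ.filter fun p : 𝔽ˣ × 𝔽ˣ => Gf αw p ≠ 0)
            = Finset.univ.filter (fun p : 𝔽ˣ × 𝔽ˣ => p.1 ≠ 1 ∧ p.2 ≠ 1) from
          Finset.filter_congr fun p _ => hiff p]
      have hprod : (Finset.univ.filter (fun p : 𝔽ˣ × 𝔽ˣ => p.1 ≠ 1 ∧ p.2 ≠ 1))
          = (Finset.univ.filter (fun a : 𝔽ˣ => a ≠ 1)) ×ˢ
            (Finset.univ.filter (fun a : 𝔽ˣ => a ≠ 1)) := by
        ext p
        simp [Finset.mem_product]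
      rw [hprod, Finset.card_product]
      rw [Finset.filter_ne', Finset.card_erase_of_mem (Finset.mem_univ _), Finset.card_univ, hcu]
      have hq21 : q - 1 - 1 = q - 2 := by omega
      rw [hq21, sq]
    exact ⟨w, hwmem, hw0, hwt⟩
  · -- lower bound
    rintro d ⟨w', hw'mem, hw'0, rfl⟩
    obtain ⟨α, hα⟩ := hw'mem
    rw [wt_eq α w' hα]
    have hex : ∃ p : 𝔽ˣ × 𝔽ˣ, Gf α p ≠ 0 := by
      have hP : ∃ P, w' P ≠ 0 := by
        by_contra h
        push_neg at h
        exact hw'0 (funext fun P => h P)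
      obtain ⟨P, hP⟩ := hP
      obtain ⟨p, rfl⟩ := mkE_surj P
      refine ⟨p, ?_⟩
      have heq : w' (mkE p) = Gf α p := by
        rw [hα (mkE p)]
        exact eval_formula α p
      rw [← heq]
      exact hP
    have := main_count α hex
    rw [← hq] at this
    exact this
end
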